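/- Let d ≥ 2 be an integer and let α = 0. Set C₀ = (2^{(d−1)/2} κ_{d−1} / (d κ_d²))^{1/(2d)}, and for λ > 0 set u_λ = √2 · C₀ · λ^{1/(2d)}. Then for every fixed h ≥ 0, lim_{λ → ∞} φ_{λ,0,u_λ}(h) = h^{(d−1)/2}. -/

import Mathlib

open MeasureTheory Real Filter

/-- `kappa j` is the Lebesgue volume of the unit ball in `ℝ^j`. -/
noncomputable def kappa (j : ℕ) : ℝ :=
  (volume (Metric.ball (0 : EuclideanSpace ℝ (Fin j)) 1)).toReal

/-- Normalized surface area `s₁` of a spherical cap of height `h` (equals `1` for `h > 2`). -/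
noncomputable def s1 (d : ℕ) (h : ℝ) : ℝ :=
  if h ≤ 2 then
    (((d : ℝ) - 1) * kappa (d - 1) / ((d : ℝ) * kappa d)) *
      ∫ θ in (0:ℝ)..(Real.arccos (1 - h)), (Real.sin θ) ^ (d - 2)
  else 1

/-- The function `g_{λ,α,u}(h)`. -/
noncomputable def gfun (lam al u h : ℝ) : ℝ :=
  min (max ((lam ^ al / u ^ 2 * h - (1 / 2) * (1 + lam ^ al) / u ^ 4 * h ^ 2) /
      (1 - h / u ^ 2)) 0) 2

/-- The density `φ_{λ,α,u}(h)`. -/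
noncomputable def phi (d : ℕ) (lam al u h : ℝ) : ℝ :=
  lam * (1 + lam ^ al) ^ d / u ^ (d + 1) / (kappa d * lam ^ ((d : ℝ) * al)) *
    s1 d (gfun lam al u h) * (1 - h / u ^ 2) ^ (d - 1)

open Set in
private lemma kappa_pos (j : ℕ) : 0 < kappa j := by
  apply ENNReal.toReal_pos
  · exact (Metric.measure_ball_pos _ _ one_pos).ne'
  · exact measure_ball_lt_top.ne


lemma div_sin : Tendsto (fun x : ℝ => x / Real.sin x) (nhdsWithin 0 (Set.Ioi 0)) (nhds 1) := by
  have h1 : Tendsto (fun x : ℝ => Real.sin x / x) (nhdsWithin 0 (Set.Ioi 0)) (nhds 1) := by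
    have := (Real.hasDerivAt_sin 0)
    rw [hasDerivAt_iff_tendsto_slope] at this
    simp only [Real.cos_zero] at this
    have h2 := this.mono_left (nhdsWithin_mono 0 (by intro x hx; exact ne_of_gt hx : Set.Ioi (0:ℝ) ⊆ {(0:ℝ)}ᶜ))
    refine h2.congr (fun x => ?_)
    simp [slope_def_field, Real.sin_zero]
  have := h1.inv₀ one_ne_zero
  simpa [inv_div] using this

lemma theta_div : Tendsto (fun θ : ℝ => θ / Real.sqrt (1 - Real.cos θ))
    (nhdsWithin 0 (Set.Ioi 0)) (nhds (Real.sqrt 2)) := by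
  have hhalf : Tendsto (fun θ : ℝ => θ / 2) (nhdsWithin 0 (Set.Ioi 0)) (nhdsWithin 0 (Set.Ioi 0)) := by
    rw [tendsto_nhdsWithin_iff]
    constructor
    · have : Tendsto (fun θ : ℝ => θ / 2) (nhds (0:ℝ)) (nhds (0/2)) :=
        (continuous_id.div_const 2).tendsto 0
      simpa using this.mono_left nhdsWithin_le_nhds
    · filter_upwards [self_mem_nhdsWithin] with θ hθ
      exact div_pos hθ (two_pos (α := ℝ))
  have hcomp : Tendsto (fun θ : ℝ => (θ/2) / Real.sin (θ/2)) (nhdsWithin 0 (Set.Ioi 0)) (nhds 1) :=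
    div_sin.comp hhalf
  have hmain : Tendsto (fun θ : ℝ => Real.sqrt 2 * ((θ/2) / Real.sin (θ/2)))
      (nhdsWithin 0 (Set.Ioi 0)) (nhds (Real.sqrt 2)) := by
    simpa using hcomp.const_mul (Real.sqrt 2)
  refine hmain.congr' ?_
  filter_upwards [Ioo_mem_nhdsGT_of_mem (by constructor <;> norm_num : (0:ℝ) ∈ Set.Ico 0 3)] with θ hθ
  obtain ⟨hθ0, hθ3⟩ := hθ
  have hs : 0 < Real.sin (θ/2) := by
    apply Real.sin_pos_of_pos_of_lt_pi (by linarith)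
    have : (3:ℝ) < Real.pi + Real.pi := by have := Real.pi_gt_three; linarith
    linarith
  have h1c : 1 - Real.cos θ = 2 * Real.sin (θ/2)^2 := by
    have h := Real.sin_sq_eq_half_sub (θ/2)
    rw [show 2*(θ/2) = θ by ring] at h
    linarith
  have hsq : Real.sqrt (1 - Real.cos θ) = Real.sqrt 2 * Real.sin (θ/2) := by
    rw [h1c, Real.sqrt_mul (by norm_num), Real.sqrt_sq hs.le]
  rw [hsq, eq_div_iff (by positivity)]
  have h2 : Real.sqrt 2 * Real.sqrt 2 = 2 := Real.mul_self_sqrt (by norm_num)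
  field_simp
  linear_combination h2

lemma arccos_tendsto : Tendsto (fun ε : ℝ => Real.arccos (1 - ε))
    (nhdsWithin 0 (Set.Ioi 0)) (nhdsWithin 0 (Set.Ioi 0)) := by
  rw [tendsto_nhdsWithin_iff]
  constructor
  · have : Tendsto (fun ε : ℝ => Real.arccos (1-ε)) (nhds 0) (nhds (Real.arccos (1-0))) :=
      (Real.continuous_arccos.comp (continuous_const.sub continuous_id)).tendsto 0
    simpa using this.mono_left nhdsWithin_le_nhds
  · filter_upwards [self_mem_nhdsWithin] with ε hε
    exact Real.arccos_pos.mpr (by simp only [Set.mem_Ioi] at hε; linarith)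

lemma arccos_div : Tendsto (fun ε : ℝ => Real.arccos (1 - ε) / Real.sqrt ε)
    (nhdsWithin 0 (Set.Ioi 0)) (nhds (Real.sqrt 2)) := by
  refine (theta_div.comp arccos_tendsto).congr' ?_
  filter_upwards [Ioo_mem_nhdsGT_of_mem (by constructor <;> norm_num : (0:ℝ) ∈ Set.Ico 0 2)] with ε hε
  obtain ⟨h0, h2⟩ := hε
  simp only [Function.comp_apply]
  rw [Real.cos_arccos (by linarith) (by linarith)]
  norm_num

lemma int_sin_pow (n : ℕ) :
    Tendsto (fun θ : ℝ => (∫ t in (0:ℝ)..θ, Real.sin t ^ n) / θ ^ (n+1))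
      (nhdsWithin 0 (Set.Ioi 0)) (nhds (1/((n:ℝ)+1))) := by
  have hmem : ∀ᶠ θ : ℝ in nhdsWithin 0 (Set.Ioi 0), θ ∈ Set.Ioo (0:ℝ) 1 :=
    Ioo_mem_nhdsGT_of_mem (by constructor <;> norm_num)
  have hup : ∀ᶠ θ : ℝ in nhdsWithin 0 (Set.Ioi 0),
      (∫ t in (0:ℝ)..θ, Real.sin t ^ n) / θ ^ (n+1) ≤ 1/(n+1) := by
    filter_upwards [hmem] with θ hθ
    obtain ⟨h0, h1⟩ := hθ
    have hint : (∫ t in (0:ℝ)..θ, Real.sin t ^ n) ≤ ∫ t in (0:ℝ)..θ, t ^ n := by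
      apply intervalIntegral.integral_mono_on h0.le
      · exact ((Real.continuous_sin.pow n).intervalIntegrable 0 θ)
      · exact ((continuous_id.pow n).intervalIntegrable 0 θ)
      · intro t ht
        obtain ⟨ht0, htθ⟩ := ht
        have hsn : 0 ≤ Real.sin t := Real.sin_nonneg_of_nonneg_of_le_pi ht0
          (by linarith [Real.pi_gt_three])
        exact pow_le_pow_left₀ hsn (Real.sin_le ht0) n
    rw [integral_pow] at hint
    have hθp : (0:ℝ) < θ ^ (n+1) := pow_pos h0 _
    rw [div_le_div_iff₀ hθp (by positivity)]
    calc (∫ t in (0:ℝ)..θ, Real.sin t ^ n) * ((n:ℝ)+1)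
        ≤ (θ^(n+1) - 0^(n+1))/((n:ℝ)+1) * ((n:ℝ)+1) := by
          apply mul_le_mul_of_nonneg_right hint (by positivity)
      _ = 1 * θ^(n+1) := by field_simp; simp
  have hlo : ∀ᶠ θ : ℝ in nhdsWithin 0 (Set.Ioi 0),
      (1 - θ^2/4)^n / ((n:ℝ)+1) ≤ (∫ t in (0:ℝ)..θ, Real.sin t ^ n) / θ ^ (n+1) := by
    filter_upwards [hmem] with θ hθ
    obtain ⟨h0, h1⟩ := hθ
    have hc : (0:ℝ) ≤ 1 - θ^2/4 := by nlinarith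
    have hint : (∫ t in (0:ℝ)..θ, ((1 - θ^2/4) * t) ^ n) ≤ ∫ t in (0:ℝ)..θ, Real.sin t ^ n := by
      apply intervalIntegral.integral_mono_on h0.le
      · exact (((continuous_const.mul continuous_id).pow n).intervalIntegrable 0 θ)
      · exact ((Real.continuous_sin.pow n).intervalIntegrable 0 θ)
      · intro t ht
        obtain ⟨ht0, htθ⟩ := ht
        apply pow_le_pow_left₀ (by positivity)
        rcases eq_or_lt_of_le ht0 with rfl | htpos
        · simp
        · have h3 := Real.sin_gt_sub_cube htpos
          have h2 : t^2 ≤ θ^2 := by nlinarith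
          nlinarith [mul_nonneg htpos.le (sub_nonneg.mpr h2)]
    have heval : (∫ t in (0:ℝ)..θ, ((1 - θ^2/4) * t) ^ n)
        = (1 - θ^2/4)^n * (θ^(n+1)/((n:ℝ)+1)) := by
      simp_rw [mul_pow]
      rw [intervalIntegral.integral_const_mul, integral_pow]
      push_cast
      ring
    rw [heval] at hint
    have hθp : (0:ℝ) < θ ^ (n+1) := pow_pos h0 _
    rw [div_le_div_iff₀ (by positivity) hθp]
    calc (1 - θ^2/4)^n * θ^(n+1)
        = ((1 - θ^2/4)^n * (θ^(n+1)/((n:ℝ)+1))) * ((n:ℝ)+1) := by field_simp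
      _ ≤ (∫ t in (0:ℝ)..θ, Real.sin t ^ n) * ((n:ℝ)+1) :=
          mul_le_mul_of_nonneg_right hint (by positivity)
  have hlim : Tendsto (fun θ : ℝ => (1 - θ^2/4)^n / ((n:ℝ)+1))
      (nhdsWithin 0 (Set.Ioi 0)) (nhds (1/((n:ℝ)+1))) := by
    have : Tendsto (fun θ : ℝ => (1 - θ^2/4)^n / ((n:ℝ)+1)) (nhds 0)
        (nhds ((1 - (0:ℝ)^2/4)^n / ((n:ℝ)+1))) := by
      apply Continuous.tendsto
      continuity
    have h2 := this.mono_left (nhdsWithin_le_nhds (s := Set.Ioi (0:ℝ)))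
    convert h2 using 2
    norm_num
  exact tendsto_of_tendsto_of_tendsto_of_le_of_le' hlim tendsto_const_nhds hlo hup

lemma s1_ratio (d : ℕ) (hd : 2 ≤ d) :
    Tendsto (fun ε : ℝ => s1 d ε / ε ^ (((d:ℝ)-1)/2)) (nhdsWithin 0 (Set.Ioi 0))
      (nhds ((2:ℝ) ^ (((d:ℝ)-1)/2) * kappa (d-1) / ((d:ℝ) * kappa d))) := by
  have hd1 : (1:ℝ) ≤ (d:ℝ) := by exact_mod_cast Nat.one_le_of_lt hd
  have hcast : ((d - 1 : ℕ) : ℝ) = (d:ℝ) - 1 := by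
    push_cast [Nat.cast_sub (by omega : 1 ≤ d)]; ring
  have hcast2 : ((d - 2 : ℕ) : ℝ) + 1 = (d:ℝ) - 1 := by
    push_cast [Nat.cast_sub (by omega : 2 ≤ d)]; ring
  set c : ℝ := ((d : ℝ) - 1) * kappa (d - 1) / ((d : ℝ) * kappa d) with hc
  have hA : Tendsto (fun ε : ℝ =>
      (∫ t in (0:ℝ)..(Real.arccos (1-ε)), Real.sin t ^ (d-2)) / (Real.arccos (1-ε)) ^ ((d-2)+1))
      (nhdsWithin 0 (Set.Ioi 0)) (nhds (1/(((d-2:ℕ):ℝ)+1))) := (int_sin_pow (d-2)).comp arccos_tendsto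
  have hB : Tendsto (fun ε : ℝ => (Real.arccos (1-ε) / Real.sqrt ε)^(d-1))
      (nhdsWithin 0 (Set.Ioi 0)) (nhds ((Real.sqrt 2)^(d-1))) := arccos_div.pow (d-1)
  have hmain := ((hA.const_mul c).mul hB)
  have hconst : c * (1/(((d-2:ℕ):ℝ)+1)) * (Real.sqrt 2)^(d-1)
      = (2:ℝ) ^ (((d:ℝ)-1)/2) * kappa (d-1) / ((d:ℝ) * kappa d) := by
    have hsq : (Real.sqrt 2)^(d-1) = (2:ℝ) ^ (((d:ℝ)-1)/2) := by
      rw [Real.sqrt_eq_rpow, ← Real.rpow_natCast ((2:ℝ) ^ ((1:ℝ)/2)) (d-1),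
        ← Real.rpow_mul (by norm_num)]
      congr 1
      rw [hcast]; ring
    rw [hsq, hcast2, hc]
    have h1 : (d:ℝ) - 1 ≠ 0 := by
      have : (2:ℝ) ≤ (d:ℝ) := by exact_mod_cast hd
      intro hx; nlinarith
    have h2 : ((d:ℝ)-1) * kappa (d-1) / ((d:ℝ) * kappa d) * (1/((d:ℝ)-1))
        = kappa (d-1)/((d:ℝ)*kappa d) := by
      rw [mul_one_div, div_div, mul_comm ((d:ℝ) * kappa d) ((d:ℝ)-1),
        mul_div_mul_left _ _ h1]
    rw [h2]
    ring
  rw [hconst] at hmain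
  refine hmain.congr' ?_
  filter_upwards [Ioo_mem_nhdsGT_of_mem (by constructor <;> norm_num : (0:ℝ) ∈ Set.Ico 0 1)] with ε hε
  obtain ⟨h0, h1⟩ := hε
  have hθ : 0 < Real.arccos (1 - ε) := Real.arccos_pos.mpr (by linarith)
  have hεp : ε ^ (((d:ℝ)-1)/2) = (Real.sqrt ε)^(d-1) := by
    rw [Real.sqrt_eq_rpow, ← Real.rpow_natCast (ε ^ ((1:ℝ)/2)) (d-1),
      ← Real.rpow_mul h0.le]
    congr 1
    rw [hcast]; ring
  have hsε : (0:ℝ) < Real.sqrt ε := Real.sqrt_pos.mpr h0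
  have hs1 : s1 d ε = c * ∫ t in (0:ℝ)..(Real.arccos (1-ε)), Real.sin t ^ (d-2) := by
    rw [s1, if_pos (by linarith)]
  rw [hs1, hεp]
  rw [div_pow]
  have hde : (d - 2) + 1 = d - 1 := by omega
  rw [hde]
  have hθp : (Real.arccos (1-ε))^(d-1) ≠ 0 := by positivity
  have hsp : (Real.sqrt ε)^(d-1) ≠ 0 := by positivity
  field_simp

/-- for `α = 0`, `C₀ = (2^{(d-1)/2} κ_{d-1}/(d κ_d²))^{1/(2d)}` and
`u_λ = √2 C₀ λ^{1/(2d)}`, `φ_{λ,0,u_λ}(h) → h^{(d-1)/2}` for every fixed `h ≥ 0`. -/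
theorem phi_limit_zero (d : ℕ) (hd : 2 ≤ d) (h : ℝ) (hh : 0 ≤ h) :
    Tendsto (fun lam : ℝ =>
        phi d lam 0
          (Real.sqrt 2 *
              (((2 : ℝ) ^ (((d : ℝ) - 1) / 2) * kappa (d - 1) / ((d : ℝ) * kappa d ^ 2)) ^
                ((1 : ℝ) / (2 * (d : ℝ)))) *
            lam ^ ((1 : ℝ) / (2 * (d : ℝ)))) h)
      atTop (nhds (h ^ (((d : ℝ) - 1) / 2))) := by
  have hd2 : (2:ℝ) ≤ (d:ℝ) := by exact_mod_cast hd
  have hdpos : (0:ℝ) < (d:ℝ) := by linarith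
  set p : ℝ := ((d:ℝ) - 1) / 2 with hp
  have hppos : 0 < p := by rw [hp]; linarith
  set B : ℝ := (2 : ℝ) ^ p * kappa (d - 1) / ((d : ℝ) * kappa d ^ 2) with hB
  have hBpos : 0 < B := by
    exact div_pos (mul_pos (Real.rpow_pos_of_pos two_pos p) (kappa_pos _))
      (mul_pos hdpos (pow_pos (kappa_pos d) 2))
  set r : ℝ := (1:ℝ) / (2 * (d:ℝ)) with hr
  have hrpos : 0 < r := by rw [hr]; positivity
  set C0 : ℝ := B ^ r with hC0
  have hC0pos : 0 < C0 := Real.rpow_pos_of_pos hBpos r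
  set u : ℝ → ℝ := fun lam => Real.sqrt 2 * C0 * lam ^ r with hu
  rcases eq_or_lt_of_le hh with rfl | hhpos
  · -- h = 0
    have hs0 : s1 d 0 = 0 := by
      rw [s1, if_pos (by norm_num)]
      simp [Real.arccos_one]
    have hg0 : ∀ lam v : ℝ, gfun lam 0 v 0 = 0 := by
      intro lam v
      simp [gfun]
    have hphi0 : ∀ lam v : ℝ, phi d lam 0 v 0 = 0 := by
      intro lam v
      rw [phi, hg0, hs0]
      ring
    rw [Real.zero_rpow hppos.ne']
    simp only [hphi0]
    exact tendsto_const_nhds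
  · -- h > 0
    have hκ : 0 < kappa d := kappa_pos d
    -- u tends to infinity
    have hu_tend : Tendsto u atTop atTop := by
      rw [hu]
      apply Tendsto.const_mul_atTop (mul_pos (Real.sqrt_pos.mpr two_pos) hC0pos)
      exact tendsto_rpow_atTop hrpos
    have hu2_tend : Tendsto (fun lam => (u lam)^2) atTop atTop :=
      (tendsto_pow_atTop (two_ne_zero)).comp hu_tend
    set ε : ℝ → ℝ := fun lam => h / (u lam)^2 with hε
    have hε_tend : Tendsto ε atTop (nhds 0) :=
      Tendsto.div_atTop tendsto_const_nhds hu2_tend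
    have hε_within : Tendsto ε atTop (nhdsWithin 0 (Set.Ioi 0)) := by
      rw [tendsto_nhdsWithin_iff]
      refine ⟨hε_tend, ?_⟩
      filter_upwards [hu_tend.eventually_gt_atTop 0] with lam hlam
      exact div_pos hhpos (pow_pos hlam 2)
    -- the limit of the ratio part
    have hL : Tendsto (fun lam => s1 d (ε lam) / (ε lam) ^ p) atTop
        (nhds ((2:ℝ) ^ p * kappa (d-1) / ((d:ℝ) * kappa d))) :=
      (s1_ratio d hd).comp hε_within
    have hone : Tendsto (fun lam => (1 - ε lam)^(d-1)) atTop (nhds 1) := by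
      have hc : Tendsto (fun x : ℝ => (1 - x)^(d-1)) (nhds 0) (nhds ((1 - (0:ℝ))^(d-1))) :=
        Continuous.tendsto (by continuity) 0
      have := hc.comp hε_tend
      simpa [Function.comp_def] using this
    set L : ℝ := (2:ℝ) ^ p * kappa (d-1) / ((d:ℝ) * kappa d) with hLdef
    have hLpos : 0 < L := by
      apply div_pos (mul_pos (Real.rpow_pos_of_pos two_pos p) (kappa_pos _))
      positivity
    have hmain : Tendsto (fun lam => (h ^ p / (kappa d * B)) * (s1 d (ε lam) / (ε lam) ^ p)
        * (1 - ε lam)^(d-1)) atTop (nhds (h ^ p)) := by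
      have := (hL.const_mul (h ^ p / (kappa d * B))).mul hone
      have hconst : (h ^ p / (kappa d * B)) * L * 1 = h ^ p := by
        have hκB : kappa d * B = L := by
          rw [hB, hLdef]
          field_simp
        rw [hκB, mul_one, div_mul_cancel₀ _ hLpos.ne']
      rw [hconst] at this
      exact this
    refine hmain.congr' ?_
    filter_upwards [eventually_gt_atTop 0, hε_tend.eventually_lt_const one_pos,
      (hε_within.eventually self_mem_nhdsWithin)] with lam hlam hε1 hε0
    replace hε0 : 0 < ε lam := hε0
    have hu0 : 0 < u lam := by positivity
    have hu2 : (0:ℝ) < (u lam)^2 := pow_pos hu0 2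
    have hεlt : h / (u lam)^2 < 1 := hε1
    have hne : 1 - h / (u lam)^2 ≠ 0 := by
      intro hx
      rw [sub_eq_zero] at hx
      rw [← hx] at hεlt
      exact lt_irrefl _ hεlt
    -- gfun evaluates to ε
    have hgfun : gfun lam 0 (u lam) h = ε lam := by
      rw [gfun, Real.rpow_zero]
      have hnum : ((1:ℝ) / (u lam) ^ 2 * h - 1 / 2 * (1 + 1) / (u lam) ^ 4 * h ^ 2) /
          (1 - h / (u lam) ^ 2) = h / (u lam)^2 := by
        rw [div_eq_iff hne]
        field_simp
        ring
      rw [hnum]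
      rw [max_eq_left hε0.le, min_eq_left (by linarith : h / (u lam)^2 ≤ 2)]
    -- the power identity
    have h2p : 2 * p = ((d - 1 : ℕ) : ℝ) := by
      push_cast [Nat.cast_sub (by omega : 1 ≤ d)]
      rw [hp]; ring
    have hεp : (ε lam) ^ p = h ^ p / (u lam) ^ (d - 1) := by
      rw [hε]
      simp only
      rw [Real.div_rpow hh (sq_nonneg _)]
      congr 1
      rw [← Real.rpow_natCast (u lam) 2, ← Real.rpow_mul hu0.le]
      push_cast
      rw [show (2:ℝ) * p = ((d - 1 : ℕ) : ℝ) from h2p, Real.rpow_natCast]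
    have hu2d : (u lam) ^ (2 * d) = 2 ^ d * B * lam := by
      rw [hu]
      simp only
      rw [mul_pow, mul_pow]
      congr 1
      · congr 1
        · rw [pow_mul, Real.sq_sqrt (by norm_num : (0:ℝ) ≤ 2)]
        · rw [hC0, ← Real.rpow_natCast (B ^ r) (2*d), ← Real.rpow_mul hBpos.le]
          rw [show r * ((2*d : ℕ) : ℝ) = 1 by
            rw [hr]; push_cast; field_simp]
          exact Real.rpow_one B
      · rw [← Real.rpow_natCast (lam ^ r) (2*d), ← Real.rpow_mul hlam.le]
        rw [show r * ((2*d : ℕ) : ℝ) = 1 by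
          rw [hr]; push_cast; field_simp]
        exact Real.rpow_one lam
    -- final algebra
    have hkey : lam * 2 ^ d / (u lam) ^ (d + 1) / kappa d
        = (h ^ p / (kappa d * B)) / (ε lam) ^ p := by
      rw [hεp]
      have hpow : (u lam) ^ (d+1) * (u lam) ^ (d-1) = (u lam) ^ (2*d) := by
        rw [← pow_add]
        congr 1
        omega
      have hhp : (0:ℝ) < h ^ p := Real.rpow_pos_of_pos hhpos p
      clear_value ε u C0 B
      field_simp
      linear_combination (-1) * hu2d + (-1) * hpow
    rw [phi, hgfun, Real.rpow_zero, mul_zero, Real.rpow_zero, mul_one]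
    rw [show ((1:ℝ) + 1) ^ d = 2 ^ d by norm_num]
    rw [hkey]
    rw [hε]
    ring
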